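/- Let n ≥ m ≥ 1 be integers, let 𝒞 be a nonempty finite family of m-element subsets of {1, …, n}, and let I ∈ 𝒞. For a probability distribution μ on 𝒞 and i ∈ {1, …, n}, write W_i(μ) = Pr_{S∼μ}[i ∈ S]. If μ minimizes ∑_{i=1}^n W_i(μ)² among all probability distributions on 𝒞, then ∑_{i∈I} W_i(μ) ≥ m²/n. -/

import Mathlib

theorem stmt_1 (n m : ℕ) (hm : 1 ≤ m) (hmn : m ≤ n)
    (𝒞 : Finset (Finset (Fin n))) (h𝒞card : ∀ S ∈ 𝒞, S.card = m)
    (I : Finset (Fin n)) (hI : I ∈ 𝒞)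
    (μ : Finset (Fin n) → ℝ) (hμ0 : ∀ S ∈ 𝒞, 0 ≤ μ S)
    (hμ1 : ∑ S ∈ 𝒞, μ S = 1)
    (hmin : ∀ ν : Finset (Fin n) → ℝ, (∀ S ∈ 𝒞, 0 ≤ ν S) → (∑ S ∈ 𝒞, ν S) = 1 →
      ∑ i : Fin n, (∑ S ∈ 𝒞.filter (fun S => i ∈ S), μ S) ^ 2 ≤
        ∑ i : Fin n, (∑ S ∈ 𝒞.filter (fun S => i ∈ S), ν S) ^ 2) :
    (m ^ 2 : ℝ) / n ≤ ∑ i ∈ I, ∑ S ∈ 𝒞.filter (fun S => i ∈ S), μ S := by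
  have hn : (0:ℝ) < n := by
    have : 1 ≤ n := le_trans hm hmn
    exact_mod_cast Nat.lt_of_lt_of_le Nat.zero_lt_one this
  set a : Fin n → ℝ := fun i => ∑ S ∈ 𝒞.filter (fun S => i ∈ S), μ S with ha
  set b : Fin n → ℝ := fun i => if i ∈ I then 1 else 0 with hb
  -- total mass of marginals is m
  have hasum : ∑ i : Fin n, a i = m := by
    calc ∑ i : Fin n, a i
        = ∑ i : Fin n, ∑ S ∈ 𝒞, if i ∈ S then μ S else 0 := by
          simp [ha, Finset.sum_filter]
      _ = ∑ S ∈ 𝒞, ∑ i : Fin n, if i ∈ S then μ S else 0 := Finset.sum_comm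
      _ = ∑ S ∈ 𝒞, (S.card : ℝ) * μ S := by
          refine Finset.sum_congr rfl fun S _ => ?_
          rw [Finset.sum_ite_mem, Finset.univ_inter, Finset.sum_const, nsmul_eq_mul]
      _ = ∑ S ∈ 𝒞, (m : ℝ) * μ S := by
          refine Finset.sum_congr rfl fun S hS => by rw [h𝒞card S hS]
      _ = m := by rw [← Finset.mul_sum, hμ1, mul_one]
  -- Cauchy–Schwarz lower bound on sum of squares
  have hCS : (m:ℝ)^2 / n ≤ ∑ i : Fin n, (a i)^2 := by
    have h := sq_sum_le_card_mul_sum_sq (s := (Finset.univ : Finset (Fin n))) (f := a)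
    rw [hasum, Finset.card_univ, Fintype.card_fin] at h
    rw [div_le_iff₀ hn]
    linarith [h]
  -- perturbation inequality
  have key : ∀ t : ℝ, 0 ≤ t → t ≤ 1 →
      ∑ i : Fin n, (a i)^2 ≤ ∑ i : Fin n, ((1-t) * a i + t * b i)^2 := by
    intro t ht0 ht1
    set ν : Finset (Fin n) → ℝ := fun S => (1-t) * μ S + t * (if S = I then 1 else 0) with hν
    have hν0 : ∀ S ∈ 𝒞, 0 ≤ ν S := by
      intro S hS
      have := hμ0 S hS
      have h1t : 0 ≤ 1 - t := by linarith
      positivity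
    have hν1 : ∑ S ∈ 𝒞, ν S = 1 := by
      simp only [hν, Finset.sum_add_distrib, ← Finset.mul_sum, hμ1,
        Finset.sum_ite_eq' 𝒞 I (fun _ => (1:ℝ)), hI, if_pos]
      ring
    have h := hmin ν hν0 hν1
    have hmarg : ∀ i : Fin n,
        ∑ S ∈ 𝒞.filter (fun S => i ∈ S), ν S = (1-t) * a i + t * b i := by
      intro i
      simp only [hν, Finset.sum_add_distrib, ← Finset.mul_sum, ha]
      congr 1
      rw [Finset.sum_ite_eq' _ I (fun _ => (1:ℝ))]
      simp only [Finset.mem_filter, hI, true_and, hb]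
    simpa [hmarg] using h
  -- extract first-order condition: D ≥ 0
  set D : ℝ := ∑ i : Fin n, a i * (b i - a i) with hD
  set C : ℝ := ∑ i : Fin n, (b i - a i)^2 with hC
  have expand : ∀ t : ℝ, ∑ i : Fin n, ((1-t) * a i + t * b i)^2
      = ∑ i : Fin n, (a i)^2 + 2 * t * D + t^2 * C := by
    intro t
    have : ∀ i : Fin n, ((1-t) * a i + t * b i)^2
        = (a i)^2 + 2*t*(a i * (b i - a i)) + t^2*((b i - a i)^2) := fun i => by ring
    simp_rw [this, Finset.sum_add_distrib, ← Finset.mul_sum]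
    rw [hD, hC]
  have hC0 : 0 ≤ C := Finset.sum_nonneg fun i _ => sq_nonneg _
  have hD0 : 0 ≤ D := by
    by_contra hneg
    push_neg at hneg
    rcases eq_or_lt_of_le hC0 with hCz | hCpos
    · -- C = 0 forces b = a, so D = 0
      have : ∀ i ∈ (Finset.univ : Finset (Fin n)), (b i - a i)^2 = 0 := by
        intro i _
        have := (Finset.sum_eq_zero_iff_of_nonneg (fun i _ => sq_nonneg (b i - a i))).1 hCz.symm
        exact this i (Finset.mem_univ i)
      have hba : ∀ i : Fin n, b i = a i := by
        intro i
        have := this i (Finset.mem_univ i)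
        have := pow_eq_zero_iff (n := 2) (by norm_num) |>.1 this
        linarith
      have : D = 0 := by
        rw [hD]
        exact Finset.sum_eq_zero fun i _ => by rw [hba i]; ring
      linarith
    · set t : ℝ := min 1 (-D / C) with htdef
      have htpos : 0 < t := lt_min one_pos (div_pos (by linarith) hCpos)
      have ht1 : t ≤ 1 := min_le_left _ _
      have htC : t * C ≤ -D := by
        have : t ≤ -D / C := min_le_right _ _
        calc t * C ≤ (-D / C) * C := mul_le_mul_of_nonneg_right this (le_of_lt hCpos)
          _ = -D := by field_simp
      have h := key t (le_of_lt htpos) ht1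
      rw [expand t] at h
      nlinarith [mul_pos htpos htpos]
  -- conclude
  have hab : ∑ i : Fin n, a i * b i = ∑ i ∈ I, a i := by
    simp [hb, mul_ite, mul_one, mul_zero, Finset.sum_ite_mem]
  have : ∑ i : Fin n, (a i)^2 ≤ ∑ i ∈ I, a i := by
    rw [← hab]
    have : D = ∑ i : Fin n, a i * b i - ∑ i : Fin n, (a i)^2 := by
      rw [hD, ← Finset.sum_sub_distrib]
      exact Finset.sum_congr rfl fun i _ => by ring
    linarith [hD0, this ▸ hD0]
  calc (m:ℝ)^2 / n ≤ ∑ i : Fin n, (a i)^2 := hCS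
    _ ≤ ∑ i ∈ I, a i := this
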